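/- arXiv:2007.06550 — 3 statements merged into one kernel-verified Lean document; each statement's English description precedes it below -/
import Mathlib

section
/- Fix a connected graph G with n ≥ 2 vertices and m edges, an orientation σ, a cycle basis ρ_1, …, ρ_c (c = m − n + 1), a noise vector ε ∈ {−1,0,1}^m, a vector x̂ = [x; f] ∈ ℤ^{m+1}, and an integer B ≥ 2. Then the number of integer vectors r with all coordinates in {−1, 0, …, B} that are bad with (σ, x̂) is at most (2B)^{n−2}. -/
open scoped BigOperators

/-- A graph on `Fin n` with `m` edges is given by the endpoint map `ends`.
An *orientation* `σ` assigns to each edge either its reference pair or the swapped pair. -/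
def IsOrientation {n m : ℕ} (ends σ : Fin m → Fin n × Fin n) : Prop :=
  ∀ e, σ e = ends e ∨ σ e = ((ends e).2, (ends e).1)

/-- The graph is simple: no loops and no parallel edges. -/
def IsSimple {n m : ℕ} (ends : Fin m → Fin n × Fin n) : Prop :=
  (∀ e, (ends e).1 ≠ (ends e).2) ∧
    ∀ e e', (ends e = ends e' ∨ ends e = ((ends e').2, (ends e').1)) → e = e'

/-- The graph is connected. -/
def IsConn {n m : ℕ} (ends : Fin m → Fin n × Fin n) : Prop :=
  ∀ a b : Fin n,
    Relation.ReflTransGen (fun u v => ∃ e, ends e = (u, v) ∨ ends e = (v, u)) a b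

/-- The configuration orientation `σ_p`: edge `{i,j}` is oriented `(i,j)` if `p i < p j`,
and `(j,i)` otherwise. -/
def configOrient {n m : ℕ} (ends : Fin m → Fin n × Fin n) {α : Type*} [LinearOrder α]
    (p : Fin n → α) : Fin m → Fin n × Fin n :=
  fun e => if p (ends e).1 < p (ends e).2 then ends e else ((ends e).2, (ends e).1)

/-- The oriented measurement map `ℓ_σ`: the entry for an edge oriented `(i,j)` is `p j - p i`. -/
def omeas {n m : ℕ} (σ : Fin m → Fin n × Fin n) {R : Type*} [Ring R] (p : Fin n → R) :
    Fin m → R :=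
  fun e => p (σ e).2 - p (σ e).1

/-- The measurement map `ℓ`: the entry for edge `{i,j}` is `|p j - p i|`. -/
def meas {n m : ℕ} (ends : Fin m → Fin n × Fin n) {R : Type*} [Ring R] [LinearOrder R]
    [IsStrictOrderedRing R]
    (p : Fin n → R) : Fin m → R :=
  fun e => |p (ends e).2 - p (ends e).1|

/-- The signed edge incidence matrix `M^σ(G)`: the row of an edge oriented `(i,j)` has
entry `-1` in column `i`, `+1` in column `j`, and `0` elsewhere. -/
def inc {n m : ℕ} (σ : Fin m → Fin n × Fin n) : Matrix (Fin m) (Fin n) ℝ :=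
  Matrix.of fun e u => if u = (σ e).2 then 1 else if u = (σ e).1 then -1 else 0

/-- A simple cycle in the graph `ends`: a cyclic sequence of `k ≥ 3` distinct vertices,
consecutive ones joined by distinct edges of the graph. -/
structure SimpleCycle {n m : ℕ} (ends : Fin m → Fin n × Fin n) where
  k : ℕ
  hk : 3 ≤ k
  v : ZMod k → Fin n
  hv : Function.Injective v
  edge : ZMod k → Fin m
  hedge : Function.Injective edge
  hends : ∀ i : ZMod k,
    ends (edge i) = (v i, v (i + 1)) ∨ ends (edge i) = (v (i + 1), v i)

open Classical in
/-- The signed cycle vector `w_{ρ,σ}` of a simple cycle `ρ` with respect to an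
orientation `σ`: `0` off the cycle, `+1` on edges whose `σ`-orientation agrees with
the traversal, `-1` on those that disagree. -/
noncomputable def cycVec {n m : ℕ} {ends : Fin m → Fin n × Fin n} (ρ : SimpleCycle ends)
    (σ : Fin m → Fin n × Fin n) : Fin m → ℤ := fun e =>
  if h : ∃ i, ρ.edge i = e then
    (if σ e = (ρ.v h.choose, ρ.v (h.choose + 1)) then 1 else -1)
  else 0

/-- The `e`-th column of the `(m+1) × m` matrix `[I_m ; rᵀ]`. -/
def latCol {m : ℕ} (r : Fin m → ℤ) (e : Fin m) : Fin (m + 1) → ℤ :=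
  Fin.snoc (fun e' => if e' = e then 1 else 0) (r e)

/-- The lattice `LatZ(r) ⊆ ℤ^{m+1}`: integer span of the columns of `[I_m ; rᵀ]`. -/
def LatZ {m : ℕ} (r : Fin m → ℤ) : Submodule ℤ (Fin (m + 1) → ℤ) :=
  Submodule.span ℤ (Set.range (latCol r))

/-- The Euclidean norm of an integer vector. -/
noncomputable def norm2 {d : ℕ} (y : Fin d → ℤ) : ℝ :=
  Real.sqrt (∑ j, ((y j : ℝ)) ^ 2)

/-- The hatted cycle vector `ŵ_{ρ,σ} = [w_{ρ,σ} ; εᵀ w_{ρ,σ}]`. -/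
noncomputable def hatCycVec {n m : ℕ} {ends : Fin m → Fin n × Fin n} (ρ : SimpleCycle ends)
    (σ : Fin m → Fin n × Fin n) (ε : Fin m → ℤ) : Fin (m + 1) → ℤ :=
  Fin.snoc (cycVec ρ σ) (∑ e, ε e * cycVec ρ σ e)

/-- A vector with all entries in `{-1, 0, 1}`. -/
def SmallVec {m : ℕ} (ε : Fin m → ℤ) : Prop := ∀ e, ε e = -1 ∨ ε e = 0 ∨ ε e = 1

/-- Cast an integer vector to a real vector. -/
def castR {d : ℕ} (y : Fin d → ℤ) : Fin d → ℝ := fun j => (y j : ℝ)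

/-- `r` is *bad* with `(σ, x̂)` (relative to the cycle basis `ρs` and noise `ε`):
`x̂` is linearly independent of the hatted cycle vectors, and `x̂` together with all the
hatted cycle vectors lie in `LatZ r`. -/
noncomputable def BadWith {n m c : ℕ} {ends : Fin m → Fin n × Fin n}
    (ρs : Fin c → SimpleCycle ends) (σ : Fin m → Fin n × Fin n) (ε : Fin m → ℤ)
    (xhat : Fin (m + 1) → ℤ) (r : Fin m → ℤ) : Prop :=
  castR xhat ∉ Submodule.span ℝ (Set.range fun i => castR (hatCycVec (ρs i) σ ε)) ∧
    xhat ∈ LatZ r ∧ ∀ i, hatCycVec (ρs i) σ ε ∈ LatZ r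

/-- `p` is *sad* with `(σ, x̂)`: `r := ℓ_σ(p) + ε` has all coordinates in `{-1, 0, …, B}`
and `r` is bad with `(σ, x̂)`. -/
noncomputable def SadWith {n m c : ℕ} {ends : Fin m → Fin n × Fin n}
    (ρs : Fin c → SimpleCycle ends) (σ : Fin m → Fin n × Fin n) (ε : Fin m → ℤ)
    (xhat : Fin (m + 1) → ℤ) (B : ℕ) (p : Fin n → ℤ) : Prop :=
  (∀ e, -1 ≤ omeas σ p e + ε e ∧ omeas σ p e + ε e ≤ (B : ℤ)) ∧
    BadWith ρs σ ε xhat (fun e => omeas σ p e + ε e)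

private def lastFun {m : ℕ} (r : Fin m → ℤ) : (Fin (m + 1) → ℤ) →ₗ[ℤ] ℤ where
  toFun y := y (Fin.last m) - ∑ e, r e * y (Fin.castSucc e)
  map_add' a b := by
    simp only [Pi.add_apply, mul_add, Finset.sum_add_distrib]; ring
  map_smul' t a := by
    simp only [Pi.smul_apply, smul_eq_mul, RingHom.id_apply, Finset.mul_sum, mul_sub]
    congr 1
    exact Finset.sum_congr rfl fun e _ => by ring

lemma LatZ_last {m : ℕ} (r : Fin m → ℤ) {y : Fin (m + 1) → ℤ} (hy : y ∈ LatZ r) :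
    y (Fin.last m) = ∑ e, r e * y (Fin.castSucc e) := by
  have h : LatZ r ≤ LinearMap.ker (lastFun r) := by
    rw [LatZ, Submodule.span_le]
    rintro _ ⟨e, rfl⟩
    simp [LinearMap.mem_ker, lastFun, latCol, mul_ite, Finset.sum_ite_eq']
  have h2 := h hy
  simp only [LinearMap.mem_ker, lastFun, LinearMap.coe_mk, AddHom.coe_mk, sub_eq_zero] at h2
  exact h2

def dotL {m : ℕ} (d : Fin m → ℝ) : (Fin m → ℝ) →ₗ[ℝ] ℝ where
  toFun v := ∑ e, d e * v e
  map_add' a b := by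
    simp only [Pi.add_apply, mul_add, Finset.sum_add_distrib]
  map_smul' t a := by
    simp only [Pi.smul_apply, smul_eq_mul, RingHom.id_apply, Finset.mul_sum]
    exact Finset.sum_congr rfl fun e _ => by ring

/-- the number of integer vectors `r` with coordinates in `{-1, 0, …, B}`
that are bad with `(σ, x̂)` is at most `(2B)^{n-2}`. -/
theorem stmt12 (n m : ℕ) (hn : 2 ≤ n) (ends : Fin m → Fin n × Fin n) (hG : IsSimple ends)
    (hconn : IsConn ends) (σ : Fin m → Fin n × Fin n) (hσ : IsOrientation ends σ)
    (ρs : Fin (m - n + 1) → SimpleCycle ends)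
    (hbasis : LinearIndependent ℝ fun i => castR (cycVec (ρs i) σ))
    (ε : Fin m → ℤ) (hε : SmallVec ε) (x : Fin m → ℤ) (f : ℤ) (B : ℕ) (hB : 2 ≤ B) :
    Nat.card {r : Fin m → ℤ //
        (∀ e, -1 ≤ r e ∧ r e ≤ (B : ℤ)) ∧ BadWith ρs σ ε (Fin.snoc x f) r} ≤
      (2 * B) ^ (n - 2) := by
  classical
  cases isEmpty_or_nonempty {r : Fin m → ℤ //
      (∀ e, -1 ≤ r e ∧ r e ≤ (B : ℤ)) ∧ BadWith ρs σ ε (Fin.snoc x f) r} with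
  | inl h => simp [Nat.card_of_isEmpty]
  | inr h =>
  obtain ⟨⟨r₀, hbox₀, hbad₀⟩⟩ := h
  have hIccNat : ((B : ℤ) + 1 - -1).toNat = B + 2 := by omega
  have h2B : B + 2 ≤ 2 * B := by omega
  have h1B : 1 ≤ 2 * B := by omega
  set w : Fin (m - n + 1) → (Fin m → ℝ) := fun i => castR (cycVec (ρs i) σ) with hw
  -- integer identities from lattice membership
  have key : ∀ r : Fin m → ℤ, BadWith ρs σ ε (Fin.snoc x f) r →
      (∑ e, r e * x e = f) ∧
        ∀ i, ∑ e, r e * cycVec (ρs i) σ e = ∑ e, ε e * cycVec (ρs i) σ e := by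
    intro r hr
    refine ⟨?_, fun i => ?_⟩
    · have h1 := LatZ_last r hr.2.1
      simpa using h1.symm
    · have h1 := LatZ_last r (hr.2.2 i)
      simp only [hatCycVec, Fin.snoc_last, Fin.snoc_castSucc] at h1
      exact h1.symm
  -- x is not in the span of the cycle vectors
  have hxspan : castR x ∉ Submodule.span ℝ (Set.range w) := by
    intro hmem
    obtain ⟨a, ha⟩ := (Submodule.mem_span_range_iff_exists_fun ℝ).1 hmem
    apply hbad₀.1
    rw [Submodule.mem_span_range_iff_exists_fun]
    refine ⟨a, funext fun j => ?_⟩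
    have hpt : ∀ e, ∑ i, a i * w i e = (x e : ℝ) := by
      intro e
      have h1 := congrFun ha e
      simpa [castR] using h1
    induction j using Fin.lastCases with
    | last =>
        have h1 := (key r₀ hbad₀).1
        have h2 := (key r₀ hbad₀).2
        simp only [Finset.sum_apply, Pi.smul_apply, smul_eq_mul, castR, hatCycVec,
          Fin.snoc_last]
        push_cast
        have hstep : ∀ i, (∑ e, (ε e : ℝ) * (cycVec (ρs i) σ e : ℝ))
            = ∑ e, (r₀ e : ℝ) * w i e := by
          intro i
          have h3 := congrArg (fun z : ℤ => (z : ℝ)) (h2 i)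
          push_cast at h3
          rw [← h3]
          rfl
        calc (∑ i, a i * ∑ e, (ε e : ℝ) * (cycVec (ρs i) σ e : ℝ))
            = ∑ i, a i * ∑ e, (r₀ e : ℝ) * w i e := by
              exact Finset.sum_congr rfl fun i _ => by rw [hstep i]
          _ = ∑ i, ∑ e, (r₀ e : ℝ) * (a i * w i e) := by
              refine Finset.sum_congr rfl fun i _ => ?_
              rw [Finset.mul_sum]
              exact Finset.sum_congr rfl fun e _ => by ring
          _ = ∑ e, (r₀ e : ℝ) * ∑ i, a i * w i e := by
              rw [Finset.sum_comm]
              exact Finset.sum_congr rfl fun e _ => by rw [Finset.mul_sum]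
          _ = ∑ e, (r₀ e : ℝ) * (x e : ℝ) := by
              exact Finset.sum_congr rfl fun e _ => by rw [hpt e]
          _ = (f : ℝ) := by exact_mod_cast congrArg (fun z : ℤ => (z : ℝ)) h1
    | cast e =>
        have h1 := hpt e
        simp only [Finset.sum_apply, Pi.smul_apply, smul_eq_mul, castR, hatCycVec,
          Fin.snoc_castSucc]
        exact h1
  -- build a basis of ℝ^m extending (x, cycle vectors) by coordinate vectors
  have hu : LinearIndependent ℝ (Fin.cons (castR x) w : Fin (m - n + 1 + 1) → (Fin m → ℝ)) :=
    linearIndependent_fin_cons.2 ⟨hbasis, hxspan⟩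
  set s : Set (Fin m → ℝ) := Set.range (Fin.cons (castR x) w : Fin (m - n + 1 + 1) → _)
    with hs_def
  have hs : LinearIndepOn ℝ id s := hu.linearIndepOn_id
  have hst : s ⊆ s ∪ Set.range (Pi.basisFun ℝ (Fin m)) := Set.subset_union_left
  set b : Set (Fin m → ℝ) := hs.extend hst with hb_def
  have hb_li : LinearIndependent ℝ ((↑) : b → (Fin m → ℝ)) := hs.linearIndepOn_extend hst
  have hsb : s ⊆ b := hs.subset_extend hst
  have hbt : b ⊆ s ∪ Set.range (Pi.basisFun ℝ (Fin m)) := hs.extend_subset hst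
  have hspanb : Submodule.span ℝ b = ⊤ := by
    rw [eq_top_iff]
    calc (⊤ : Submodule ℝ (Fin m → ℝ))
        = Submodule.span ℝ (Set.range (Pi.basisFun ℝ (Fin m))) :=
          (Pi.basisFun ℝ (Fin m)).span_eq.symm
      _ ≤ Submodule.span ℝ b := Submodule.span_le.2
          (fun v hv => hs.subset_span_extend hst (Set.mem_union_right _ hv))
  have hbfin : b.Finite := hb_li.setFinite
  haveI : Fintype b := hbfin.fintype
  have hbcard : b.ncard = m := by
    have h1 := finrank_span_set_eq_card hb_li
    rw [hspanb, finrank_top] at h1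
    rw [Set.ncard_eq_toFinset_card' b, ← h1]
    simp
  have hscard : s.ncard = (m - n + 1) + 1 := by
    rw [hs_def, ← Set.image_univ, Set.ncard_image_of_injective _ hu.injective,
      Set.ncard_univ, Nat.card_eq_fintype_card, Fintype.card_fin]
  have hdiff : (b \ s).ncard ≤ n - 2 := by
    rw [Set.ncard_diff hsb (hbfin.subset hsb), hbcard, hscard]
    omega
  -- the coordinate set S
  set Sset : Set (Fin m) := {e | Pi.basisFun ℝ (Fin m) e ∈ b \ s} with hS_def
  have hScard : Sset.ncard ≤ n - 2 := by
    have h1 : Sset.ncard = ((Pi.basisFun ℝ (Fin m)) '' Sset).ncard :=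
      (Set.ncard_image_of_injective _ (Pi.basisFun ℝ (Fin m)).injective).symm
    rw [h1]
    refine le_trans (Set.ncard_le_ncard ?_ (hbfin.diff (t := s))) hdiff
    rintro _ ⟨e, he, rfl⟩
    exact he
  haveI : Fintype Sset := (Set.toFinite Sset).fintype
  -- the injection into functions S → Icc (-1) B
  set F : {r : Fin m → ℤ //
        (∀ e, -1 ≤ r e ∧ r e ≤ (B : ℤ)) ∧ BadWith ρs σ ε (Fin.snoc x f) r} →
      (Sset → (Finset.Icc (-1 : ℤ) (B : ℤ))) :=
    fun r e => ⟨r.1 e.1, Finset.mem_Icc.2 ⟨(r.2.1 e.1).1, (r.2.1 e.1).2⟩⟩ with hF_def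
  have hinj : Function.Injective F := by
    rintro ⟨r, hrbox, hrbad⟩ ⟨r', hrbox', hrbad'⟩ hFeq
    have hagree : ∀ e ∈ Sset, r e = r' e := by
      intro e he
      have h1 := congrFun hFeq ⟨e, he⟩
      exact congrArg Subtype.val h1
    set d : Fin m → ℝ := fun e => (r e : ℝ) - (r' e : ℝ) with hd
    have hdot : ∀ v ∈ b, ∑ e, d e * v e = 0 := by
      intro v hv
      rcases Classical.em (v ∈ s) with hvs | hvs
      · rw [hs_def] at hvs
        obtain ⟨j, rfl⟩ := hvs
        induction j using Fin.cases with
        | zero =>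
            have h1 := (key r hrbad).1
            have h1' := (key r' hrbad').1
            have h2 : ((∑ e, r e * x e : ℤ) : ℝ) - ((∑ e, r' e * x e : ℤ) : ℝ) = 0 := by
              rw [h1, h1']; ring
            push_cast at h2
            simp only [Fin.cons_zero, castR, hd, sub_mul, Finset.sum_sub_distrib]
            exact h2
        | succ i =>
            have h2 := (key r hrbad).2 i
            have h2' := (key r' hrbad').2 i
            have h3 : ((∑ e, r e * cycVec (ρs i) σ e : ℤ) : ℝ)
                - ((∑ e, r' e * cycVec (ρs i) σ e : ℤ) : ℝ) = 0 := by
              rw [h2, h2']; ring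
            push_cast at h3
            simp only [Fin.cons_succ, hw, castR, hd, sub_mul, Finset.sum_sub_distrib]
            exact h3
      · rcases hbt hv with hvs' | hvb
        · exact absurd hvs' hvs
        · obtain ⟨e₀, rfl⟩ := hvb
          have he₀ : e₀ ∈ Sset := by
            rw [hS_def]
            exact ⟨hv, hvs⟩
          have hre : r e₀ = r' e₀ := hagree e₀ he₀
          simp only [Pi.basisFun_apply, Pi.single_apply, mul_ite, mul_one, mul_zero,
            Finset.sum_ite_eq', Finset.mem_univ, if_true, hd, hre, sub_self]
    have hL : ∑ e, d e * d e = 0 := by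
      have h1 : Submodule.span ℝ b ≤ LinearMap.ker (dotL d) :=
        Submodule.span_le.2 (fun v hv => by
          simp only [SetLike.mem_coe, LinearMap.mem_ker, dotL, LinearMap.coe_mk, AddHom.coe_mk]
          exact hdot v hv)
      rw [hspanb] at h1
      have h2 := h1 (Submodule.mem_top (x := d))
      simpa [dotL] using h2
    have hdzero : ∀ e, d e = 0 := by
      intro e
      have hnn : ∀ e ∈ Finset.univ, (0 : ℝ) ≤ d e * d e := fun e _ => mul_self_nonneg _
      have h1 := (Finset.sum_eq_zero_iff_of_nonneg hnn).1 hL e (Finset.mem_univ e)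
      exact mul_self_eq_zero.1 h1
    apply Subtype.ext
    funext e
    have h1 := hdzero e
    rw [hd] at h1
    have h2 : (r e : ℝ) = (r' e : ℝ) := by linarith [sub_eq_zero.1 h1]
    exact_mod_cast h2
  have hcount := Nat.card_le_card_of_injective F hinj
  have hIcc : Nat.card (Finset.Icc (-1 : ℤ) (B : ℤ)) = B + 2 := by
    rw [Nat.card_eq_fintype_card, Fintype.card_coe, Int.card_Icc]
    exact hIccNat
  have hScc : Nat.card Sset = Sset.ncard := Nat.card_coe_set_eq Sset
  have htarget : Nat.card (Sset → (Finset.Icc (-1 : ℤ) (B : ℤ))) = (B + 2) ^ Sset.ncard := by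
    rw [Nat.card_fun, hIcc, hScc]
  calc Nat.card {r : Fin m → ℤ //
        (∀ e, -1 ≤ r e ∧ r e ≤ (B : ℤ)) ∧ BadWith ρs σ ε (Fin.snoc x f) r}
      ≤ Nat.card (Sset → (Finset.Icc (-1 : ℤ) (B : ℤ))) := hcount
    _ = (B + 2) ^ Sset.ncard := htarget
    _ ≤ (2 * B) ^ Sset.ncard := Nat.pow_le_pow_left h2B _
    _ ≤ (2 * B) ^ (n - 2) := Nat.pow_le_pow_right h1B hScard
end

section
/- Fix a connected graph G with n ≥ 2 vertices and m edges, a vertex-consistent orientation σ, a cycle basis ρ_1, …, ρ_c (c = m − n + 1), a noise vector ε ∈ {−1,0,1}^m, a vector x̂ = [x; f] ∈ ℤ^{m+1}, and an integer B ≥ 2. Then the number of configurations p ∈ {1, …, B}^n that are sad with (σ, x̂) is at most (2B)^{n−1}. -/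
open scoped BigOperators
open scoped Matrix

section AuxHelpers

open Finset

/-- integer incidence coefficient -/
def zinc {n m : ℕ} (σ : Fin m → Fin n × Fin n) (e : Fin m) (u : Fin n) : ℤ :=
  if u = (σ e).2 then 1 else if u = (σ e).1 then -1 else 0

lemma aux_sum_pm {R : Type*} [Ring R] {n : ℕ} (a b : Fin n) (hab : a ≠ b) (p : Fin n → R) :
    ∑ u, (if u = a then (1:R) else if u = b then -1 else 0) * p u = p a - p b := by
  have key : ∀ u : Fin n, (if u = a then (1:R) else if u = b then -1 else 0) * p u
      = (if u = a then p u else 0) - (if u = b then p u else 0) := by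
    intro u
    by_cases h1 : u = a
    · subst h1; simp [hab]
    · by_cases h2 : u = b
      · subst h2; simp [h1, Ne.symm hab]
      · simp [h1, h2]
  rw [Finset.sum_congr rfl (fun u _ => key u), Finset.sum_sub_distrib]
  simp

lemma aux_zinc_sum {n m : ℕ} (σ : Fin m → Fin n × Fin n) (hne : ∀ e, (σ e).1 ≠ (σ e).2)
    (e : Fin m) (p : Fin n → ℤ) :
    ∑ u, (zinc σ e u : ℤ) * p u = p (σ e).2 - p (σ e).1 := by
  unfold zinc
  exact aux_sum_pm _ _ (Ne.symm (hne e)) p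

lemma aux_latz_last {m : ℕ} {r : Fin m → ℤ} {v : Fin (m + 1) → ℤ} (hv : v ∈ LatZ r) :
    v (Fin.last m) = ∑ e, r e * v e.castSucc := by
  set Φ : (Fin (m + 1) → ℤ) →ₗ[ℤ] ℤ :=
    (LinearMap.proj (Fin.last m)) - ∑ e, r e • (LinearMap.proj e.castSucc) with hΦ
  have hker : LatZ r ≤ LinearMap.ker Φ := by
    rw [LatZ, Submodule.span_le]
    rintro _ ⟨e, rfl⟩
    simp only [SetLike.mem_coe, LinearMap.mem_ker, hΦ, LinearMap.sub_apply,
      LinearMap.sum_apply, LinearMap.smul_apply, LinearMap.proj_apply, smul_eq_mul]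
    unfold latCol
    simp [Fin.snoc_last, Fin.snoc_castSucc, mul_ite]
  have := hker hv
  simp only [LinearMap.mem_ker, hΦ, LinearMap.sub_apply, LinearMap.sum_apply,
    LinearMap.smul_apply, LinearMap.proj_apply, smul_eq_mul, sub_eq_zero] at this
  exact this

lemma aux_hne {n m : ℕ} {ends σ : Fin m → Fin n × Fin n} (hG : IsSimple ends)
    (hσ : IsOrientation ends σ) : ∀ e, (σ e).1 ≠ (σ e).2 := by
  intro e
  rcases hσ e with h | h <;> rw [h]
  · exact hG.1 e
  · exact (hG.1 e).symm

lemma aux_castR_snoc {m : ℕ} (a : Fin m → ℤ) (b : ℤ) :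
    castR (Fin.snoc a b) = Fin.snoc (castR a) ((b : ℝ)) := by
  funext j
  refine Fin.lastCases ?_ ?_ j
  · simp [castR, Fin.snoc_last]
  · intro i; simp [castR, Fin.snoc_castSucc]

lemma aux_inc_cast {n m : ℕ} (σ : Fin m → Fin n × Fin n) (e : Fin m) (u : Fin n) :
    inc σ e u = ((zinc σ e u : ℤ) : ℝ) := by
  unfold inc zinc
  simp only [Matrix.of_apply]
  split_ifs <;> simp

/-- the cycle vector is in the kernel of the transposed incidence matrix (integer version) -/
lemma aux_cyc_ker {n m : ℕ} {ends σ : Fin m → Fin n × Fin n} (hσ : IsOrientation ends σ)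
    (ρ : SimpleCycle ends) (u : Fin n) :
    ∑ e, zinc σ e u * cycVec ρ σ e = 0 := by
  haveI : NeZero ρ.k := ⟨by have := ρ.hk; omega⟩
  haveI : Fact (1 < ρ.k) := ⟨by have := ρ.hk; omega⟩
  have hvne : ∀ i : ZMod ρ.k, ρ.v i ≠ ρ.v (i + 1) := by
    intro i h
    have h2 := ρ.hv h
    have h3 : (0 : ZMod ρ.k) = 1 := by
      have := h2
      nth_rewrite 1 [← add_zero i] at this
      exact add_left_cancel this
    exact zero_ne_one h3
  have hσe : ∀ i : ZMod ρ.k, σ (ρ.edge i) = (ρ.v i, ρ.v (i + 1)) ∨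
      σ (ρ.edge i) = (ρ.v (i + 1), ρ.v i) := by
    intro i
    rcases ρ.hends i with h | h <;> rcases hσ (ρ.edge i) with h2 | h2 <;> rw [h2, h]
    · left; rfl
    · right; rfl
    · right; rfl
    · left; rfl
  have hcyc : ∀ i : ZMod ρ.k, cycVec ρ σ (ρ.edge i) =
      if σ (ρ.edge i) = (ρ.v i, ρ.v (i + 1)) then 1 else -1 := by
    intro i
    unfold cycVec
    have hex : ∃ j, ρ.edge j = ρ.edge i := ⟨i, rfl⟩
    rw [dif_pos hex]
    have h3 : hex.choose = i := ρ.hedge hex.choose_spec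
    rw [h3]
  have hterm : ∀ i : ZMod ρ.k, zinc σ (ρ.edge i) u * cycVec ρ σ (ρ.edge i)
      = (if u = ρ.v (i + 1) then 1 else 0) - (if u = ρ.v i then 1 else 0) := by
    intro i
    rw [hcyc i]
    unfold zinc
    rcases hσe i with h | h <;> rw [h]
    · simp only [if_pos rfl]
      by_cases h1 : u = ρ.v (i + 1)
      · subst h1; simp [Ne.symm (hvne i)]
      · by_cases h2 : u = ρ.v i
        · subst h2; simp [h1, hvne i]
        · simp [h1, h2]
    · have hne2 : ((ρ.v (i + 1), ρ.v i) : Fin n × Fin n) ≠ (ρ.v i, ρ.v (i + 1)) := by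
        intro hc
        exact hvne i (congrArg Prod.snd hc)
      rw [if_neg hne2]
      by_cases h1 : u = ρ.v (i + 1)
      · subst h1; simp [Ne.symm (hvne i)]
      · by_cases h2 : u = ρ.v i
        · subst h2; simp [h1, hvne i]
        · simp [h1, h2]
  have hsupp : ∀ e ∈ Finset.univ, e ∉ Finset.univ.image ρ.edge →
      zinc σ e u * cycVec ρ σ e = 0 := by
    intro e _ he
    have : ¬ ∃ j, ρ.edge j = e := by
      intro ⟨j, hj⟩
      exact he (Finset.mem_image.2 ⟨j, Finset.mem_univ j, hj⟩)
    unfold cycVec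
    rw [dif_neg this, mul_zero]
  rw [← Finset.sum_subset (Finset.subset_univ (Finset.univ.image ρ.edge)) hsupp]
  rw [Finset.sum_image (fun i _ j _ h => ρ.hedge h)]
  rw [Finset.sum_congr rfl (fun i _ => hterm i), Finset.sum_sub_distrib]
  rw [Equiv.sum_comp (Equiv.addRight (1 : ZMod ρ.k))
    (fun i => if u = ρ.v i then (1 : ℤ) else 0) |>.symm]
  simp only [Equiv.coe_addRight]
  exact sub_eq_zero.2 (Finset.sum_congr rfl fun _ _ => by congr)

lemma aux_inc_mulVec {n m : ℕ} (σ : Fin m → Fin n × Fin n) (hne : ∀ e, (σ e).1 ≠ (σ e).2)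
    (p : Fin n → ℝ) (e : Fin m) : (inc σ).mulVec p e = p (σ e).2 - p (σ e).1 := by
  unfold Matrix.mulVec dotProduct inc
  simp only [Matrix.of_apply]
  exact aux_sum_pm _ _ (Ne.symm (hne e)) p

lemma aux_kerR {n m : ℕ} (σ : Fin m → Fin n × Fin n) (v : Fin m → ℤ)
    (hv : ∀ u, ∑ e, zinc σ e u * v e = 0) :
    (inc σ)ᵀ.mulVecLin (castR v) = 0 := by
  funext u
  rw [Matrix.mulVecLin_apply]
  show ∑ e, (inc σ)ᵀ u e * castR v e = 0
  have : ∀ e, (inc σ)ᵀ u e * castR v e = ((zinc σ e u * v e : ℤ) : ℝ) := by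
    intro e
    rw [Matrix.transpose_apply, aux_inc_cast]
    simp [castR]
  rw [Finset.sum_congr rfl (fun e _ => this e), ← Int.cast_sum, hv u, Int.cast_zero]

end AuxHelpers

/-- for a vertex-consistent orientation `σ`, the number of configurations
`p ∈ {1,…,B}^n` that are sad with `(σ, x̂)` is at most `(2B)^{n-1}`. -/
theorem stmt14 (n m : ℕ) (hn : 2 ≤ n) (ends : Fin m → Fin n × Fin n) (hG : IsSimple ends)
    (hconn : IsConn ends) (σ : Fin m → Fin n × Fin n) (hσ : IsOrientation ends σ)
    (hvc : ∃ q : Fin n → ℤ, σ = configOrient ends q)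
    (ρs : Fin (m - n + 1) → SimpleCycle ends)
    (hbasis : LinearIndependent ℝ fun i => castR (cycVec (ρs i) σ))
    (ε : Fin m → ℤ) (hε : SmallVec ε) (x : Fin m → ℤ) (f : ℤ) (B : ℕ) (hB : 2 ≤ B) :
    Nat.card {p : Fin n → ℤ //
        (∀ i, 1 ≤ p i ∧ p i ≤ (B : ℤ)) ∧ SadWith ρs σ ε (Fin.snoc x f) B p} ≤
      (2 * B) ^ (n - 1) := by
  classical
  have hne : ∀ e, (σ e).1 ≠ (σ e).2 := aux_hne hG hσ
  set y : Fin n → ℤ := fun u => ∑ e, zinc σ e u * x e with hy_def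
  have hswap : ∀ p : Fin n → ℤ, ∑ u, y u * p u = ∑ e, omeas σ p e * x e := by
    intro p
    simp only [hy_def]
    simp_rw [Finset.sum_mul]
    rw [Finset.sum_comm]
    refine Finset.sum_congr rfl fun e _ => ?_
    have h1 : ∑ u, zinc σ e u * x e * p u = (∑ u, zinc σ e u * p u) * x e := by
      rw [Finset.sum_mul]; exact Finset.sum_congr rfl fun u _ => by ring
    rw [h1, aux_zinc_sum σ hne e p]
    unfold omeas; ring
  have hlin : ∀ p : Fin n → ℤ, SadWith ρs σ ε (Fin.snoc x f) B p →
      ∑ u, y u * p u = f - ∑ e, ε e * x e := by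
    intro p hp
    have h2 := aux_latz_last hp.2.2.1
    simp only [Fin.snoc_last, Fin.snoc_castSucc] at h2
    rw [hswap p]
    have h3 : ∑ e, (omeas σ p e + ε e) * x e
        = ∑ e, omeas σ p e * x e + ∑ e, ε e * x e := by
      rw [← Finset.sum_add_distrib]; exact Finset.sum_congr rfl fun e _ => by ring
    rw [h3] at h2
    omega
  by_cases hy : y = 0
  · -- the sad set is empty
    have hempty : IsEmpty {p : Fin n → ℤ //
        (∀ i, 1 ≤ p i ∧ p i ≤ (B : ℤ)) ∧ SadWith ρs σ ε (Fin.snoc x f) B p} := by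
      constructor
      rintro ⟨p, hbound, hsad⟩
      set M := inc σ with hM
      -- step relation preserves values of kernel elements
      have hconst : ∀ p' : Fin n → ℝ, M.mulVecLin p' = 0 → ∀ a b : Fin n, p' a = p' b := by
        intro p' hp' a b
        have hstep : ∀ c d : Fin n, (∃ e, ends e = (c, d) ∨ ends e = (d, c)) → p' c = p' d := by
          rintro c d ⟨e, he⟩
          have hmv : M.mulVec p' e = 0 := by
            have := congrFun hp' e
            rwa [Matrix.mulVecLin_apply] at this
          have h0 : p' (σ e).2 - p' (σ e).1 = 0 := by
            rw [← aux_inc_mulVec σ hne p' e]; exact hmv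
          have hσcd : σ e = (c, d) ∨ σ e = (d, c) := by
            rcases hσ e with h | h <;> rcases he with h' | h' <;> rw [h, h']
            · left; rfl
            · right; rfl
            · right; rfl
            · left; rfl
          rcases hσcd with h | h <;> rw [h] at h0 <;> simp at h0 <;> linarith
        have h := hconn a b
        induction h with
        | refl => rfl
        | @tail b c hab hbc ih => exact ih.trans (hstep b c hbc)
      have hker1 : LinearMap.ker M.mulVecLin = Submodule.span ℝ {(fun _ => (1:ℝ) : Fin n → ℝ)} := by
        apply le_antisymm
        · intro p' hp'
          rw [Submodule.mem_span_singleton]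
          refine ⟨p' ⟨0, by omega⟩, funext fun u => ?_⟩
          have := hconst p' (LinearMap.mem_ker.1 hp') u ⟨0, by omega⟩
          simp [this]
        · rw [Submodule.span_le, Set.singleton_subset_iff]
          simp only [SetLike.mem_coe, LinearMap.mem_ker]
          funext e
          rw [Matrix.mulVecLin_apply, aux_inc_mulVec σ hne _ e]
          simp
      have hfr1 : Module.finrank ℝ (LinearMap.ker M.mulVecLin) = 1 := by
        rw [hker1]
        refine finrank_span_singleton ?_
        intro hcontra
        have := congrFun hcontra ⟨0, by omega⟩
        simp at this
      have hrank : M.rank + 1 = n := by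
        have h := LinearMap.finrank_range_add_finrank_ker M.mulVecLin
        rw [hfr1, Module.finrank_fintype_fun_eq_card] at h
        simpa [Matrix.rank] using h
      set K := LinearMap.ker (Mᵀ.mulVecLin) with hK
      have hrn2 : Mᵀ.rank + Module.finrank ℝ K = m := by
        have h := LinearMap.finrank_range_add_finrank_ker Mᵀ.mulVecLin
        rw [Module.finrank_fintype_fun_eq_card] at h
        simpa [Matrix.rank] using h
      have hrT : Mᵀ.rank = M.rank := Matrix.rank_transpose M
      have hwK : ∀ i, castR (cycVec (ρs i) σ) ∈ K := by
        intro i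
        rw [hK, LinearMap.mem_ker]
        exact aux_kerR σ _ (aux_cyc_ker hσ (ρs i))
      have hxK : castR x ∈ K := by
        rw [hK, LinearMap.mem_ker]
        refine aux_kerR σ x fun u => ?_
        exact congrFun hy u
      let w' : Fin (m - n + 1) → K := fun i => ⟨castR (cycVec (ρs i) σ), hwK i⟩
      have hw'li : LinearIndependent ℝ w' := by
        apply LinearIndependent.of_comp K.subtype
        exact hbasis
      have hcardle : Fintype.card (Fin (m - n + 1)) ≤ Module.finrank ℝ K :=
        hw'li.fintype_card_le_finrank
      have hfrK : Fintype.card (Fin (m - n + 1)) = Module.finrank ℝ K := by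
        simp only [Fintype.card_fin] at hcardle ⊢
        omega
      have htop := hw'li.span_eq_top_of_card_eq_finrank' hfrK
      have hxspan : castR x ∈ Submodule.span ℝ (Set.range fun i => castR (cycVec (ρs i) σ)) := by
        have h1 : (⟨castR x, hxK⟩ : K) ∈ Submodule.span ℝ (Set.range w') := by
          rw [htop]; trivial
        have h2 := Submodule.mem_map_of_mem (f := K.subtype) h1
        rw [Submodule.map_span, ← Set.range_comp] at h2
        exact h2
      -- lift to hatted vectors
      let comp : Fin (m + 1) → ((Fin m → ℝ) →ₗ[ℝ] ℝ) :=
        Fin.snoc (fun e => LinearMap.proj e) (∑ e, (ε e : ℝ) • LinearMap.proj e)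
      let T : (Fin m → ℝ) →ₗ[ℝ] (Fin (m + 1) → ℝ) := LinearMap.pi comp
      have hT : ∀ v : Fin m → ℝ, T v = Fin.snoc v (∑ e, (ε e : ℝ) * v e) := by
        intro v
        funext j
        refine Fin.lastCases ?_ ?_ j
        · simp [T, comp, LinearMap.pi_apply, Fin.snoc_last]
        · intro e
          simp [T, comp, LinearMap.pi_apply, Fin.snoc_castSucc]
      have hTw : ∀ i, T (castR (cycVec (ρs i) σ)) = castR (hatCycVec (ρs i) σ ε) := by
        intro i
        rw [hT]
        unfold hatCycVec
        rw [aux_castR_snoc]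
        have hc : ∑ e, (ε e : ℝ) * castR (cycVec (ρs i) σ) e
            = ((∑ e, ε e * cycVec (ρs i) σ e : ℤ) : ℝ) := by
          push_cast [castR]; rfl
        rw [hc]
      have hf : f = ∑ e, ε e * x e := by
        have h1 := hlin p hsad
        simp only [hy, Pi.zero_apply, zero_mul, Finset.sum_const_zero] at h1
        omega
      have hxhat : castR (Fin.snoc x f) ∈
          Submodule.span ℝ (Set.range fun i => castR (hatCycVec (ρs i) σ ε)) := by
        have h3 := Submodule.apply_mem_span_image_of_mem_span T hxspan
        rw [← Set.range_comp] at h3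
        have h4 : (T ∘ fun i => castR (cycVec (ρs i) σ))
            = fun i => castR (hatCycVec (ρs i) σ ε) := funext hTw
        rw [h4] at h3
        have h5 : T (castR x) = castR (Fin.snoc x f) := by
          rw [hT, aux_castR_snoc]
          have hc : ∑ e, (ε e : ℝ) * castR x e = ((f : ℤ) : ℝ) := by
            rw [hf]; push_cast [castR]; rfl
          rw [hc]
        rwa [h5] at h3
      exact hsad.2.1 hxhat
    rw [Nat.card_of_isEmpty]
    exact Nat.zero_le _
  · -- y ≠ 0 : injection into a box of size B^(n-1)
    have hex : ∃ u, y u ≠ 0 := by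
      by_contra h; push_neg at h; exact hy (funext h)
    obtain ⟨u0, hu0⟩ := hex
    let F : {p : Fin n → ℤ //
        (∀ i, 1 ≤ p i ∧ p i ≤ (B : ℤ)) ∧ SadWith ρs σ ε (Fin.snoc x f) B p} →
        ({u : Fin n // u ≠ u0} → (Finset.Icc (1:ℤ) (B:ℤ))) :=
      fun q u => ⟨q.1 u.1, Finset.mem_Icc.2 (q.2.1 u.1)⟩
    have hF : Function.Injective F := by
      rintro ⟨p, hp⟩ ⟨q, hq⟩ h
      have hpq : ∀ u, u ≠ u0 → p u = q u := by
        intro u hu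
        have h' := congrFun h ⟨u, hu⟩
        simpa [F, Subtype.ext_iff] using h'
      have h1 := hlin p hp.2
      have h2 := hlin q hq.2
      have hs : ∑ u, y u * (p u - q u) = 0 := by
        have h4 : ∑ u, y u * (p u - q u) = ∑ u, y u * p u - ∑ u, y u * q u := by
          rw [← Finset.sum_sub_distrib]; exact Finset.sum_congr rfl fun u _ => by ring
        rw [h4, h1, h2]; ring
      rw [Finset.sum_eq_single u0 (fun b _ hb => by rw [hpq b hb]; ring)
        (fun hb => absurd (Finset.mem_univ u0) hb)] at hs
      have hpq0 : p u0 = q u0 := by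
        rcases mul_eq_zero.1 hs with h' | h'
        · exact absurd h' hu0
        · exact sub_eq_zero.1 h'
      refine Subtype.ext (funext fun u => ?_)
      by_cases hu : u = u0
      · rw [hu]; exact hpq0
      · exact hpq u hu
    calc Nat.card {p : Fin n → ℤ //
        (∀ i, 1 ≤ p i ∧ p i ≤ (B : ℤ)) ∧ SadWith ρs σ ε (Fin.snoc x f) B p}
        ≤ Nat.card ({u : Fin n // u ≠ u0} → (Finset.Icc (1:ℤ) (B:ℤ))) :=
          Nat.card_le_card_of_injective F hF
      _ = B ^ (n - 1) := by
          rw [Nat.card_eq_fintype_card, Fintype.card_fun]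
          congr 1
          · rw [Fintype.card_coe, Int.card_Icc]
            simp
          · rw [Fintype.card_subtype_compl, Fintype.card_subtype_eq, Fintype.card_fin]
      _ ≤ (2 * B) ^ (n - 1) := Nat.pow_le_pow_left (by omega) _
end

section
/- Fix a connected graph G with n ≥ 2 vertices and m edges, a cycle basis ρ_1, …, ρ_c (c = m − n + 1), a fixed noise vector ε ∈ {−1,0,1}^m, a fixed vector x̂ ∈ ℤ^{m+1}, and an integer B ≥ 2. For p chosen uniformly at random from the configurations {1, …, B}^n, the probability that x̂ ∈ Lat(ℓ(p) + ε) and x̂ is not in the real linear span of the vectors ŵ_{ρ_1}, …, ŵ_{ρ_c} (taken with respect to the configuration orientation σ_p) is at most 2^n · n! / B. -/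
open scoped BigOperators
open scoped Matrix

section Chunk2
variable {n m : ℕ} {ends σ : Fin m → Fin n × Fin n}

lemma cycVec_edge (ρ : SimpleCycle ends) (σ : Fin m → Fin n × Fin n) (i : ZMod ρ.k) :
    cycVec ρ σ (ρ.edge i) = if σ (ρ.edge i) = (ρ.v i, ρ.v (i + 1)) then 1 else -1 := by
  have h : ∃ j, ρ.edge j = ρ.edge i := ⟨i, rfl⟩
  have hch : h.choose = i := ρ.hedge h.choose_spec
  rw [cycVec, dif_pos h, hch]

lemma cycVec_not_edge (ρ : SimpleCycle ends) (σ : Fin m → Fin n × Fin n) {e : Fin m}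
    (h : ¬ ∃ i, ρ.edge i = e) : cycVec ρ σ e = 0 := by
  rw [cycVec, dif_neg h]

lemma v_ne (ρ : SimpleCycle ends) (i : ZMod ρ.k) : ρ.v i ≠ ρ.v (i + 1) := by
  haveI : Fact (1 < ρ.k) := ⟨by have := ρ.hk; omega⟩
  intro h
  have hi := ρ.hv h
  exact one_ne_zero (left_eq_add.mp hi)

lemma sigma_on_cycle (hσ : IsOrientation ends σ) (ρ : SimpleCycle ends) (i : ZMod ρ.k) :
    σ (ρ.edge i) = (ρ.v i, ρ.v (i + 1)) ∨ σ (ρ.edge i) = (ρ.v (i + 1), ρ.v i) := by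
  rcases hσ (ρ.edge i) with h | h <;> rcases ρ.hends i with h' | h' <;> simp [h, h']

lemma telescope (hσ : IsOrientation ends σ) (ρ : SimpleCycle ends) (q : Fin n → ℝ) :
    ∑ e, (cycVec ρ σ e : ℝ) * (q (σ e).2 - q (σ e).1) = 0 := by
  haveI : NeZero ρ.k := ⟨by have := ρ.hk; omega⟩
  have h0 : ∑ e, (cycVec ρ σ e : ℝ) * (q (σ e).2 - q (σ e).1)
      = ∑ e ∈ Finset.univ.image ρ.edge, (cycVec ρ σ e : ℝ) * (q (σ e).2 - q (σ e).1) := by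
    symm
    apply Finset.sum_subset (Finset.subset_univ _)
    intro e _ he
    have hne : ¬ ∃ i, ρ.edge i = e := by
      rintro ⟨i, hi⟩; exact he (Finset.mem_image.mpr ⟨i, Finset.mem_univ _, hi⟩)
    rw [cycVec_not_edge ρ σ hne]; simp
  rw [h0, Finset.sum_image (fun a _ b _ h => ρ.hedge h)]
  have h1 : ∀ i : ZMod ρ.k, (cycVec ρ σ (ρ.edge i) : ℝ) *
      (q (σ (ρ.edge i)).2 - q (σ (ρ.edge i)).1) = q (ρ.v (i + 1)) - q (ρ.v i) := by
    intro i
    rcases sigma_on_cycle hσ ρ i with h | h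
    · rw [cycVec_edge, if_pos h, h]; push_cast; ring
    · have hne : σ (ρ.edge i) ≠ (ρ.v i, ρ.v (i + 1)) := by
        rw [h]; intro hc; exact v_ne ρ i (congrArg Prod.fst hc).symm
      rw [cycVec_edge, if_neg hne, h]; push_cast; ring
  rw [Finset.sum_congr rfl (fun i _ => h1 i), Finset.sum_sub_distrib]
  have h2 : ∑ i : ZMod ρ.k, q (ρ.v (i + 1)) = ∑ i : ZMod ρ.k, q (ρ.v i) :=
    Fintype.sum_bijective (· + 1) (Equiv.addRight 1).bijective _ _ (fun i => rfl)
  rw [h2, sub_self]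

lemma cycVec_sign (ρ : SimpleCycle ends) (hσ : IsOrientation ends σ) (e : Fin m) :
    (cycVec ρ σ e : ℝ) = (if σ e = ends e then (1 : ℝ) else -1) * (cycVec ρ ends e : ℝ) := by
  by_cases h : ∃ i, ρ.edge i = e
  · obtain ⟨i, rfl⟩ := h
    have hvne := v_ne ρ i
    rcases hσ (ρ.edge i) with hs | hs <;> rcases ρ.hends i with h' | h' <;>
        rw [cycVec_edge, cycVec_edge] <;>
      · simp [hs, h', Prod.ext_iff, hvne, Ne.symm hvne]
  · rw [cycVec_not_edge ρ σ h, cycVec_not_edge ρ ends h]; simp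

lemma indep_sign {c : ℕ} (ρs : Fin c → SimpleCycle ends) (hσ : IsOrientation ends σ)
    (hbasis : LinearIndependent ℝ fun i => castR (cycVec (ρs i) ends)) :
    LinearIndependent ℝ fun i => castR (cycVec (ρs i) σ) := by
  classical
  set s : Fin m → ℝ := fun e => if σ e = ends e then 1 else -1 with hs_def
  have hs : ∀ e, s e ≠ 0 := fun e => by by_cases h : σ e = ends e <;> simp [hs_def, h]
  let T : (Fin m → ℝ) →ₗ[ℝ] (Fin m → ℝ) :=
    { toFun := fun y e => s e * y e
      map_add' := by
        intro a b
        funext e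
        simp only [Pi.add_apply]
        ring
      map_smul' := by
        intro c a
        funext e
        simp only [Pi.smul_apply, smul_eq_mul, RingHom.id_apply]
        ring }
  have hker : LinearMap.ker T = ⊥ := by
    rw [LinearMap.ker_eq_bot']
    intro y hy
    funext e
    have h1 : s e * y e = 0 := congrFun hy e
    exact (mul_eq_zero.mp h1).resolve_left (hs e)
  have h2 := hbasis.map' T hker
  have h3 : (⇑T ∘ fun i => castR (cycVec (ρs i) ends)) = fun i => castR (cycVec (ρs i) σ) := by
    funext i e
    show s e * castR (cycVec (ρs i) ends) e = castR (cycVec (ρs i) σ) e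
    exact (cycVec_sign (ρs i) hσ e).symm
  rwa [h3] at h2

end Chunk2

section Chunk3
variable {n m : ℕ} {ends σ : Fin m → Fin n × Fin n}

lemma ite_row_sum {R : Type*} [Ring R] {h t : Fin n} (hht : h ≠ t) (y : Fin n → R) :
    ∑ u, (if u = h then (1 : R) else if u = t then -1 else 0) * y u = y h - y t := by
  have key : ∀ u : Fin n, (if u = h then (1 : R) else if u = t then -1 else 0) * y u
      = (if u = h then y u else 0) - (if u = t then y u else 0) := by
    intro u
    by_cases h1 : u = h
    · subst h1; rw [if_pos rfl, if_pos rfl, if_neg hht]; simp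
    · by_cases h2 : u = t
      · subst h2; rw [if_neg h1, if_pos rfl, if_neg h1, if_pos rfl]; simp
      · rw [if_neg h1, if_neg h2, if_neg h1, if_neg h2]; simp
  rw [Finset.sum_congr rfl fun u _ => key u, Finset.sum_sub_distrib,
    Finset.sum_ite_eq' Finset.univ h y, Finset.sum_ite_eq' Finset.univ t y]
  simp

lemma sigma_ne (hG : IsSimple ends) (hσ : IsOrientation ends σ) (e : Fin m) :
    (σ e).1 ≠ (σ e).2 := by
  rcases hσ e with h | h <;> rw [h]
  · exact hG.1 e
  · exact (hG.1 e).symm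

lemma inc_mulVec (hG : IsSimple ends) (hσ : IsOrientation ends σ) (y : Fin n → ℝ) (e : Fin m) :
    ((inc σ).mulVec y) e = y (σ e).2 - y (σ e).1 := by
  have h0 : ((inc σ).mulVec y) e
      = ∑ u, (if u = (σ e).2 then (1 : ℝ) else if u = (σ e).1 then -1 else 0) * y u := by
    simp [Matrix.mulVec, dotProduct, inc]
  rw [h0, ite_row_sum (Ne.symm (sigma_ne hG hσ e)) y]

lemma incT_mulVec (x : Fin m → ℝ) (u : Fin n) :
    ((inc σ)ᵀ.mulVec x) u = ∑ e, (x e) * (inc σ e u) := by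
  simp [Matrix.mulVec, dotProduct, Matrix.transpose_apply, mul_comm]

lemma ker_eq_span (hn : 2 ≤ n) (hG : IsSimple ends) (hconn : IsConn ends)
    (hσ : IsOrientation ends σ) (ρs : Fin (m - n + 1) → SimpleCycle ends)
    (hbasis : LinearIndependent ℝ fun i => castR (cycVec (ρs i) ends)) :
    LinearMap.ker (Matrix.mulVecLin (inc σ)ᵀ) =
      Submodule.span ℝ (Set.range fun i => castR (cycVec (ρs i) σ)) := by
  classical
  have hn0 : 0 < n := by omega
  -- kernel of M is the constants
  have hkerM : LinearMap.ker (Matrix.mulVecLin (inc σ))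
      = Submodule.span ℝ {(fun _ => 1 : Fin n → ℝ)} := by
    apply le_antisymm
    · intro y hy
      rw [LinearMap.mem_ker] at hy
      have hy' : ∀ e, y (σ e).2 = y (σ e).1 := by
        intro e
        have h2 : ((inc σ).mulVec y) e = 0 := by
          rw [← Matrix.mulVecLin_apply, hy]; rfl
        have h3 := inc_mulVec hG hσ y e
        rw [h2] at h3
        linarith
      have hstep : ∀ a b : Fin n, (∃ e, ends e = (a, b) ∨ ends e = (b, a)) → y a = y b := by
        rintro a b ⟨e, he | he⟩ <;> rcases hσ e with hs | hs <;> have h4 := hy' e <;>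
          rw [hs, he] at h4
        · exact h4.symm
        · exact h4
        · exact h4
        · exact h4.symm
      have hgen : ∀ a b : Fin n,
          Relation.ReflTransGen (fun u v => ∃ e, ends e = (u, v) ∨ ends e = (v, u)) a b →
          y b = y a := by
        intro a b h
        induction h with
        | refl => rfl
        | tail _ hbc ih => exact (hstep _ _ hbc).symm.trans ih
      have hconst : ∀ u : Fin n, y u = y ⟨0, hn0⟩ :=
        fun u => hgen _ _ (hconn ⟨0, hn0⟩ u)
      rw [Submodule.mem_span_singleton]
      refine ⟨y ⟨0, hn0⟩, ?_⟩
      funext u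
      simp [hconst u]
    · rw [Submodule.span_le, Set.singleton_subset_iff, SetLike.mem_coe, LinearMap.mem_ker]
      funext e
      rw [Matrix.mulVecLin_apply, inc_mulVec hG hσ]
      simp
  have h1ne : (fun _ => (1 : ℝ) : Fin n → ℝ) ≠ 0 := by
    intro h
    have := congrFun h ⟨0, hn0⟩
    simpa using this
  have hdim1 : Module.finrank ℝ (LinearMap.ker (Matrix.mulVecLin (inc σ))) = 1 := by
    rw [hkerM]
    exact finrank_span_singleton h1ne
  have hrank : (inc σ).rank + 1 = n := by
    have h5 := LinearMap.finrank_range_add_finrank_ker (Matrix.mulVecLin (inc σ))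
    rw [hdim1, Module.finrank_pi, Fintype.card_fin] at h5
    exact h5
  have hrn : (inc σ)ᵀ.rank + Module.finrank ℝ (LinearMap.ker (Matrix.mulVecLin (inc σ)ᵀ)) = m := by
    have h5 := LinearMap.finrank_range_add_finrank_ker (Matrix.mulVecLin (inc σ)ᵀ)
    rw [Module.finrank_pi, Fintype.card_fin] at h5
    exact h5
  have hrT : (inc σ)ᵀ.rank = (inc σ).rank := Matrix.rank_transpose _
  -- span of cycle vectors is inside the kernel
  have hle : Submodule.span ℝ (Set.range fun i => castR (cycVec (ρs i) σ))
      ≤ LinearMap.ker (Matrix.mulVecLin (inc σ)ᵀ) := by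
    rw [Submodule.span_le]
    rintro _ ⟨i, rfl⟩
    rw [SetLike.mem_coe, LinearMap.mem_ker]
    funext u
    rw [Matrix.mulVecLin_apply]
    show ((inc σ)ᵀ.mulVec (castR (cycVec (ρs i) σ))) u = 0
    rw [incT_mulVec]
    have hq : ∀ e, inc σ e u
        = (fun v => if u = v then (1 : ℝ) else 0) (σ e).2
          - (fun v => if u = v then (1 : ℝ) else 0) (σ e).1 := by
      intro e
      have hne := sigma_ne hG hσ e
      by_cases h2 : u = (σ e).2
      · have h1 : ¬ u = (σ e).1 := fun hc => hne (hc.symm.trans h2)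
        simp [inc, h2, h1, hne, Ne.symm hne]
      · by_cases h1 : u = (σ e).1 <;> simp [inc, h2, h1, hne, Ne.symm hne]
    calc ∑ e, castR (cycVec (ρs i) σ) e * inc σ e u
        = ∑ e, (cycVec (ρs i) σ e : ℝ) *
            ((fun v => if u = v then (1 : ℝ) else 0) (σ e).2
              - (fun v => if u = v then (1 : ℝ) else 0) (σ e).1) := by
          exact Finset.sum_congr rfl fun e _ => by rw [hq e]; rfl
      _ = 0 := telescope hσ (ρs i) (fun v => if u = v then (1 : ℝ) else 0)
  have hfr : Module.finrank ℝ (Submodule.span ℝ (Set.range fun i => castR (cycVec (ρs i) σ)))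
      = m - n + 1 := by
    rw [finrank_span_eq_card (indep_sign ρs hσ hbasis), Fintype.card_fin]
  have hmono := Submodule.finrank_mono hle
  refine (Submodule.eq_of_le_of_finrank_eq hle ?_).symm
  rw [hfr]
  omega

end Chunk3

section Chunk4
variable {n m : ℕ} {ends σ : Fin m → Fin n × Fin n}

lemma latz_eq {m : ℕ} (r : Fin m → ℤ) {x : Fin (m + 1) → ℤ} (hx : x ∈ LatZ r) :
    x (Fin.last m) = ∑ e, r e * x e.castSucc := by
  let φ : (Fin (m + 1) → ℤ) →ₗ[ℤ] ℤ :=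
    { toFun := fun y => y (Fin.last m) - ∑ e, r e * y e.castSucc
      map_add' := by
        intro a b
        simp only [Pi.add_apply, mul_add, Finset.sum_add_distrib]
        ring
      map_smul' := by
        intro c a
        simp only [Pi.smul_apply, smul_eq_mul, RingHom.id_apply]
        rw [mul_sub, Finset.mul_sum]
        congr 1
        apply Finset.sum_congr rfl
        intro e _
        ring }
  have hker : LatZ r ≤ LinearMap.ker φ := by
    rw [LatZ, Submodule.span_le]
    rintro _ ⟨e, rfl⟩
    simp only [SetLike.mem_coe, LinearMap.mem_ker]
    show latCol r e (Fin.last m) - ∑ e', r e' * latCol r e e'.castSucc = 0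
    simp [latCol, Fin.snoc_last, Fin.snoc_castSucc, mul_ite, Finset.sum_ite_eq']
  have h := hker hx
  rw [LinearMap.mem_ker] at h
  exact sub_eq_zero.mp h

lemma config_isOrientation (p : Fin n → ℤ) : IsOrientation ends (configOrient ends p) := by
  intro e
  rw [configOrient]
  by_cases h : p (ends e).1 < p (ends e).2
  · left; rw [if_pos h]
  · right; rw [if_neg h]

lemma meas_config (p : Fin n → ℤ) (e : Fin m) :
    meas ends p e = omeas (configOrient ends p) p e := by
  rw [meas, omeas, configOrient]
  by_cases h : p (ends e).1 < p (ends e).2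
  · rw [if_pos h]
    exact abs_of_nonneg (by omega)
  · rw [if_neg h]
    push_neg at h
    show |p (ends e).2 - p (ends e).1| = p (ends e).1 - p (ends e).2
    rw [abs_sub_comm]
    exact abs_of_nonneg (by omega)

lemma a_dot_p (hG : IsSimple ends) (hσ : IsOrientation ends σ) (xhat : Fin (m + 1) → ℤ)
    (p : Fin n → ℤ) :
    ∑ u, (∑ e, xhat e.castSucc *
        (if u = (σ e).2 then (1 : ℤ) else if u = (σ e).1 then -1 else 0)) * p u
      = ∑ e, xhat e.castSucc * omeas σ p e := by
  have h1 : ∀ u, (∑ e, xhat e.castSucc *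
      (if u = (σ e).2 then (1 : ℤ) else if u = (σ e).1 then -1 else 0)) * p u
      = ∑ e, xhat e.castSucc *
        ((if u = (σ e).2 then (1 : ℤ) else if u = (σ e).1 then -1 else 0) * p u) := by
    intro u
    rw [Finset.sum_mul]
    apply Finset.sum_congr rfl
    intro e _
    ring
  rw [Finset.sum_congr rfl fun u _ => h1 u, Finset.sum_comm]
  apply Finset.sum_congr rfl
  intro e _
  rw [← Finset.mul_sum, ite_row_sum (Ne.symm (sigma_ne hG hσ e)) p, omeas]

lemma bad_a_ne_zero (hn : 2 ≤ n) (hG : IsSimple ends) (hconn : IsConn ends)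
    (hσ : IsOrientation ends σ) (ρs : Fin (m - n + 1) → SimpleCycle ends)
    (hbasis : LinearIndependent ℝ fun i => castR (cycVec (ρs i) ends))
    (ε : Fin m → ℤ) (xhat : Fin (m + 1) → ℤ) (p : Fin n → ℤ)
    (hlat : xhat (Fin.last m) = ∑ e, (omeas σ p e + ε e) * xhat e.castSucc)
    (hnspan : castR xhat ∉ Submodule.span ℝ
      (Set.range fun i => castR (hatCycVec (ρs i) σ ε))) :
    ¬ ∀ u, (∑ e, xhat e.castSucc *
      (if u = (σ e).2 then (1 : ℤ) else if u = (σ e).1 then -1 else 0)) = 0 := by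
  intro ha
  apply hnspan
  classical
  set x : Fin m → ℝ := fun e => (xhat e.castSucc : ℝ) with hx_def
  have hker : x ∈ LinearMap.ker (Matrix.mulVecLin (inc σ)ᵀ) := by
    rw [LinearMap.mem_ker]
    funext u
    rw [Matrix.mulVecLin_apply]
    show ((inc σ)ᵀ.mulVec x) u = (0 : Fin n → ℝ) u
    rw [incT_mulVec]
    have hcast : ∀ e, (x e) * inc σ e u
        = ((xhat e.castSucc *
            (if u = (σ e).2 then (1 : ℤ) else if u = (σ e).1 then -1 else 0) : ℤ) : ℝ) := by
      intro e
      push_cast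
      congr 1
    rw [Finset.sum_congr rfl fun e _ => hcast e, ← Int.cast_sum, ha u, Int.cast_zero]
    simp
  rw [ker_eq_span hn hG hconn hσ ρs hbasis] at hker
  obtain ⟨cfs, hcfs⟩ := (Submodule.mem_span_range_iff_exists_fun ℝ).mp hker
  refine (Submodule.mem_span_range_iff_exists_fun ℝ).mpr ⟨cfs, ?_⟩
  have hx_e : ∀ e : Fin m, ∑ i, cfs i * (cycVec (ρs i) σ e : ℝ) = x e := by
    intro e
    have h := congrFun hcfs e
    rw [Finset.sum_apply] at h
    simpa [castR] using h
  funext j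
  rw [Finset.sum_apply]
  refine Fin.lastCases ?_ ?_ j
  · -- last coordinate
    have hhat_last : ∀ i, castR (hatCycVec (ρs i) σ ε) (Fin.last m)
        = ∑ e, (ε e : ℝ) * (cycVec (ρs i) σ e : ℝ) := by
      intro i
      show ((hatCycVec (ρs i) σ ε (Fin.last m) : ℤ) : ℝ) = _
      rw [hatCycVec, Fin.snoc_last]
      push_cast
      try rfl
    have hsmul : ∀ i, (cfs i • castR (hatCycVec (ρs i) σ ε)) (Fin.last m)
        = cfs i * castR (hatCycVec (ρs i) σ ε) (Fin.last m) := fun i => rfl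
    rw [Finset.sum_congr rfl fun i _ => by rw [hsmul i, hhat_last i]]
    -- RHS
    have hzero : ∑ e, ((omeas σ p e : ℤ) : ℝ) * x e = 0 := by
      calc ∑ e, ((omeas σ p e : ℤ) : ℝ) * x e
          = ∑ e, ∑ i, cfs i * ((cycVec (ρs i) σ e : ℝ) * ((omeas σ p e : ℤ) : ℝ)) := by
            apply Finset.sum_congr rfl
            intro e _
            rw [← hx_e e, Finset.mul_sum]
            apply Finset.sum_congr rfl
            intro i _
            ring
        _ = ∑ i, cfs i * ∑ e, (cycVec (ρs i) σ e : ℝ) * ((omeas σ p e : ℤ) : ℝ) := by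
            rw [Finset.sum_comm]
            apply Finset.sum_congr rfl
            intro i _
            rw [Finset.mul_sum]
        _ = 0 := by
            apply Finset.sum_eq_zero
            intro i _
            have ht := telescope hσ (ρs i) (fun v => (p v : ℝ))
            have h2 : ∑ e, (cycVec (ρs i) σ e : ℝ) * ((omeas σ p e : ℤ) : ℝ) = 0 := by
              rw [← ht]
              apply Finset.sum_congr rfl
              intro e _
              congr 1
              show ((p (σ e).2 - p (σ e).1 : ℤ) : ℝ) = _
              push_cast
              rfl
            rw [h2, mul_zero]
    have heps : ∑ e, (ε e : ℝ) * x e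
        = ∑ i, cfs i * ∑ e, (ε e : ℝ) * (cycVec (ρs i) σ e : ℝ) := by
      calc ∑ e, (ε e : ℝ) * x e
          = ∑ e, ∑ i, cfs i * ((ε e : ℝ) * (cycVec (ρs i) σ e : ℝ)) := by
            apply Finset.sum_congr rfl
            intro e _
            rw [← hx_e e, Finset.mul_sum]
            apply Finset.sum_congr rfl
            intro i _
            ring
        _ = ∑ i, cfs i * ∑ e, (ε e : ℝ) * (cycVec (ρs i) σ e : ℝ) := by
            rw [Finset.sum_comm]
            apply Finset.sum_congr rfl
            intro i _
            rw [Finset.mul_sum]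
    have hlatR : castR xhat (Fin.last m)
        = ∑ e, ((omeas σ p e : ℤ) : ℝ) * x e + ∑ e, (ε e : ℝ) * x e := by
      show ((xhat (Fin.last m) : ℤ) : ℝ) = _
      rw [hlat]
      push_cast
      rw [← Finset.sum_add_distrib]
      apply Finset.sum_congr rfl
      intro e _
      show _ = ((omeas σ p e : ℤ) : ℝ) * x e + ((ε e : ℤ) : ℝ) * x e
      ring
    rw [hlatR, hzero, zero_add, heps]
  · -- castSucc coordinates
    intro e
    have hhat_e : ∀ i, (cfs i • castR (hatCycVec (ρs i) σ ε)) e.castSucc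
        = cfs i * (cycVec (ρs i) σ e : ℝ) := by
      intro i
      show cfs i * ((hatCycVec (ρs i) σ ε e.castSucc : ℤ) : ℝ) = _
      rw [hatCycVec, Fin.snoc_castSucc]
    rw [Finset.sum_congr rfl fun i _ => hhat_e i]
    exact hx_e e

lemma count_hyperplane (B : ℕ) {a : Fin n → ℤ} {C : ℤ} (hn : 1 ≤ n) (ha : a ≠ 0) :
    ((Fintype.piFinset (fun _ : Fin n => Finset.Icc (1 : ℤ) (B : ℤ))).filter
      (fun p => ∑ u, a u * p u = C)).card ≤ B ^ (n - 1) := by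
  classical
  obtain ⟨u0, hu0⟩ : ∃ u, a u ≠ 0 := by
    by_contra h
    push_neg at h
    exact ha (funext h)
  have hcs : Fintype.card {u : Fin n // u ≠ u0} = n - 1 := by
    simp [Fintype.card_subtype_compl, Fintype.card_fin]
  have hcard : (Fintype.piFinset
      (fun _ : {u : Fin n // u ≠ u0} => Finset.Icc (1 : ℤ) (B : ℤ))).card = B ^ (n - 1) := by
    rw [Fintype.card_piFinset]
    rw [Finset.prod_const]
    rw [Int.card_Icc]
    simp [hcs]
  rw [← hcard]
  apply Finset.card_le_card_of_injOn (fun p (u : {u : Fin n // u ≠ u0}) => p u.val)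
  · intro p hp
    rw [Finset.mem_coe, Finset.mem_filter] at hp
    rw [Finset.mem_coe, Fintype.mem_piFinset]
    intro u
    exact Fintype.mem_piFinset.mp hp.1 u.val
  · intro p hp q hq hfq
    rw [Finset.mem_coe, Finset.mem_filter] at hp hq
    have heq : ∀ u, u ≠ u0 → p u = q u := fun u hu => congrFun hfq ⟨u, hu⟩
    have hs : ∀ r : Fin n → ℤ, ∑ u, a u * r u
        = a u0 * r u0 + ∑ u ∈ Finset.univ.erase u0, a u * r u := by
      intro r
      rw [← Finset.add_sum_erase _ _ (Finset.mem_univ u0)]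
    have hrest : ∑ u ∈ Finset.univ.erase u0, a u * p u
        = ∑ u ∈ Finset.univ.erase u0, a u * q u := by
      apply Finset.sum_congr rfl
      intro u hu
      rw [heq u (Finset.ne_of_mem_erase hu)]
    have hsum : ∑ u, a u * p u = ∑ u, a u * q u := hp.2.trans hq.2.symm
    rw [hs p, hs q, hrest] at hsum
    have h1 : a u0 * p u0 = a u0 * q u0 := by linarith
    have h2 : p u0 = q u0 := mul_left_cancel₀ hu0 h1
    funext u
    by_cases h : u = u0
    · rw [h]; exact h2
    · exact heq u h

end Chunk4

section Chunk5
variable {n : ℕ}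

lemma mono_eq_iff {f g : Fin n → ℤ} (hf : Monotone f) (hg : Monotone g)
    (hcons : ∀ (a : Fin n) (h : (a : ℕ) + 1 < n),
      (f a = f ⟨(a : ℕ) + 1, h⟩ ↔ g a = g ⟨(a : ℕ) + 1, h⟩)) :
    ∀ (a b : Fin n), a ≤ b → (f a = f b ↔ g a = g b) := by
  have key : ∀ d : ℕ, ∀ a b : Fin n, (b : ℕ) = (a : ℕ) + d → (f a = f b ↔ g a = g b) := by
    intro d
    induction d with
    | zero =>
      intro a b hab
      have hab' : a = b := Fin.ext (by omega)
      subst hab'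
      tauto
    | succ d ih =>
      intro a b hab
      have hb := b.isLt
      have hlt : (a : ℕ) + 1 < n := by omega
      set a' : Fin n := ⟨(a : ℕ) + 1, hlt⟩ with ha'
      have h1 : a ≤ a' := by rw [Fin.le_def]; simp [ha']
      have h2 : a' ≤ b := by rw [Fin.le_def]; simp [ha']; omega
      have hsplit : ∀ F : Fin n → ℤ, Monotone F → (F a = F b ↔ F a = F a' ∧ F a' = F b) := by
        intro F hF
        constructor
        · intro hh
          have l1 : F a ≤ F a' := hF h1
          have l2 : F a' ≤ F b := hF h2
          constructor <;> omega
        · rintro ⟨u1, u2⟩; exact u1.trans u2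
      rw [hsplit f hf, hsplit g hg, hcons a hlt, ih a' b (by simp [ha']; omega)]
  intro a b hab
  exact key ((b : ℕ) - (a : ℕ)) a b (by have := Fin.le_def.mp hab; omega)

lemma mono_lt_iff {f g : Fin n → ℤ} (hf : Monotone f) (hg : Monotone g)
    (hcons : ∀ (a : Fin n) (h : (a : ℕ) + 1 < n),
      (f a = f ⟨(a : ℕ) + 1, h⟩ ↔ g a = g ⟨(a : ℕ) + 1, h⟩)) :
    ∀ a b : Fin n, (f a < f b ↔ g a < g b) := by
  intro a b
  rcases le_or_gt a b with h | h
  · have hiff := mono_eq_iff hf hg hcons a b h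
    have l1 : f a ≤ f b := hf h
    have l2 : g a ≤ g b := hg h
    constructor
    · intro hlt
      by_contra hng
      push_neg at hng
      have hge : g a = g b := le_antisymm l2 hng
      have := hiff.mpr hge
      omega
    · intro hlt
      by_contra hnf
      push_neg at hnf
      have hfe : f a = f b := le_antisymm l1 hnf
      have := hiff.mp hfe
      omega
  · have l1 : f b ≤ f a := hf h.le
    have l2 : g b ≤ g a := hg h.le
    constructor <;> intro hlt <;> omega

def keyF (p : Fin n → ℤ) : Equiv.Perm (Fin n) × (Fin n → Bool) :=
  (Tuple.sort p, fun k => if h : (k : ℕ) + 1 < n then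
    decide (p (Tuple.sort p k) = p (Tuple.sort p ⟨(k : ℕ) + 1, h⟩)) else false)

lemma keyF_lt_iff {p q : Fin n → ℤ} (h : keyF p = keyF q) :
    ∀ i j, (p i < p j ↔ q i < q j) := by
  intro i j
  have hπ : Tuple.sort p = Tuple.sort q := congrArg Prod.fst h
  set π := Tuple.sort p with hπ_def
  have hf : Monotone (p ∘ π) := Tuple.monotone_sort p
  have hg : Monotone (q ∘ π) := by rw [hπ]; exact Tuple.monotone_sort q
  have hb := congrArg Prod.snd h
  have hcons : ∀ (a : Fin n) (hh : (a : ℕ) + 1 < n),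
      ((p ∘ π) a = (p ∘ π) ⟨(a : ℕ) + 1, hh⟩ ↔ (q ∘ π) a = (q ∘ π) ⟨(a : ℕ) + 1, hh⟩) := by
    intro a hh
    have hba := congrFun hb a
    simp only [keyF] at hba
    rw [dif_pos hh, dif_pos hh] at hba
    rw [← hπ] at hba
    exact decide_eq_decide.mp hba
  have hiff := mono_lt_iff hf hg hcons (π.symm i) (π.symm j)
  simpa using hiff

lemma keyF_configOrient {m : ℕ} (ends : Fin m → Fin n × Fin n) {p q : Fin n → ℤ}
    (h : keyF p = keyF q) : configOrient ends p = configOrient ends q := by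
  funext e
  rw [configOrient, configOrient]
  exact if_congr (keyF_lt_iff h _ _) rfl rfl

end Chunk5



/-- for `p` uniform in `{1,…,B}^n`, the probability that
`x̂ ∈ LatZ(ℓ(p) + ε)` and `x̂` is not in the real span of the hatted cycle vectors
(formed w.r.t. `σ_p`) is at most `2^n · n! / B`. -/
theorem stmt16 (n m : ℕ) (hn : 2 ≤ n) (ends : Fin m → Fin n × Fin n) (hG : IsSimple ends)
    (hconn : IsConn ends)
    (ρs : Fin (m - n + 1) → SimpleCycle ends)
    (hbasis : LinearIndependent ℝ fun i => castR (cycVec (ρs i) ends))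
    (ε : Fin m → ℤ) (hε : SmallVec ε) (xhat : Fin (m + 1) → ℤ) (B : ℕ) (hB : 2 ≤ B) :
    (Nat.card {p : Fin n → ℤ //
        (∀ i, 1 ≤ p i ∧ p i ≤ (B : ℤ)) ∧
        xhat ∈ LatZ (fun e => meas ends p e + ε e) ∧
        castR xhat ∉ Submodule.span ℝ
          (Set.range fun i => castR (hatCycVec (ρs i) (configOrient ends p) ε))} : ℝ) /
        (B : ℝ) ^ n ≤
      2 ^ n * Nat.factorial n / B := by
  classical
  have hB0 : (0 : ℝ) < (B : ℝ) := by
    have : 0 < B := by omega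
    exact_mod_cast this
  set box : Finset (Fin n → ℤ) := Fintype.piFinset (fun _ : Fin n => Finset.Icc (1 : ℤ) (B : ℤ))
    with hbox
  set T : Finset (Fin n → ℤ) := box.filter (fun p =>
      xhat ∈ LatZ (fun e => meas ends p e + ε e) ∧
      castR xhat ∉ Submodule.span ℝ
        (Set.range fun i => castR (hatCycVec (ρs i) (configOrient ends p) ε))) with hT
  have hcardeq : Nat.card {p : Fin n → ℤ //
      (∀ i, 1 ≤ p i ∧ p i ≤ (B : ℤ)) ∧
      xhat ∈ LatZ (fun e => meas ends p e + ε e) ∧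
      castR xhat ∉ Submodule.span ℝ
        (Set.range fun i => castR (hatCycVec (ρs i) (configOrient ends p) ε))} = T.card := by
    have e1 : {p : Fin n → ℤ //
        (∀ i, 1 ≤ p i ∧ p i ≤ (B : ℤ)) ∧
        xhat ∈ LatZ (fun e => meas ends p e + ε e) ∧
        castR xhat ∉ Submodule.span ℝ
          (Set.range fun i => castR (hatCycVec (ρs i) (configOrient ends p) ε))}
        ≃ {p : Fin n → ℤ // p ∈ T} := by
      apply Equiv.subtypeEquivRight
      intro p
      rw [hT, Finset.mem_filter, hbox, Fintype.mem_piFinset]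
      simp only [Finset.mem_Icc]
    rw [Nat.card_congr e1, Nat.card_eq_fintype_card, Fintype.card_coe]
  have hmain : T.card ≤ Nat.factorial n * 2 ^ n * B ^ (n - 1) := by
    rw [Finset.card_eq_sum_card_fiberwise
      (f := keyF) (t := (Finset.univ : Finset (Equiv.Perm (Fin n) × (Fin n → Bool))))
      (fun x _ => Finset.mem_univ _)]
    have hbound : ∀ κ ∈ (Finset.univ : Finset (Equiv.Perm (Fin n) × (Fin n → Bool))),
        (T.filter (fun p => keyF p = κ)).card ≤ B ^ (n - 1) := by
      intro κ _
      rcases Finset.eq_empty_or_nonempty (T.filter (fun p => keyF p = κ)) with hemp | hne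
      · rw [hemp]; simp
      · obtain ⟨p0, hp0⟩ := hne
        have hp0' := Finset.mem_filter.mp hp0
        have hp0T := Finset.mem_filter.mp hp0'.1
        set σ : Fin m → Fin n × Fin n := configOrient ends p0 with hσ_def
        have hσor : IsOrientation ends σ := config_isOrientation p0
        set a : Fin n → ℤ := fun u => ∑ e, xhat e.castSucc *
          (if u = (σ e).2 then (1 : ℤ) else if u = (σ e).1 then -1 else 0) with ha_def
        set C : ℤ := xhat (Fin.last m) - ∑ e, ε e * xhat e.castSucc with hC_def
        have hfiber : ∀ p ∈ T.filter (fun p => keyF p = κ), configOrient ends p = σ := by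
          intro p hp
          have h1 := (Finset.mem_filter.mp hp).2
          have h0 := hp0'.2
          exact keyF_configOrient ends (h1.trans h0.symm)
        have heqn : ∀ p ∈ T.filter (fun p => keyF p = κ), ∑ u, a u * p u = C := by
          intro p hp
          have hσp := hfiber p hp
          have hpT := Finset.mem_filter.mp (Finset.mem_filter.mp hp).1
          have hl := latz_eq _ hpT.2.1
          calc ∑ u, a u * p u = ∑ e, xhat e.castSucc * omeas σ p e :=
                a_dot_p hG hσor xhat p
            _ = C := by
                rw [hC_def, hl]
                have hsplit : ∑ e, (meas ends p e + ε e) * xhat e.castSucc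
                    = ∑ e, xhat e.castSucc * omeas σ p e + ∑ e, ε e * xhat e.castSucc := by
                  rw [← Finset.sum_add_distrib]
                  apply Finset.sum_congr rfl
                  intro e _
                  rw [meas_config p e, hσp]
                  ring
                rw [hsplit]
                ring
        have hane : a ≠ 0 := by
          intro h0
          have hlat0 := latz_eq _ hp0T.2.1
          have hnspan0 := hp0T.2.2
          refine bad_a_ne_zero hn hG hconn hσor ρs hbasis ε xhat p0 ?_ ?_ ?_
          · rw [hlat0]
            apply Finset.sum_congr rfl
            intro e _
            rw [meas_config p0 e, hσ_def]
          · exact hnspan0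
          · intro u
            exact congrFun h0 u
        have hsubset : T.filter (fun p => keyF p = κ)
            ⊆ box.filter (fun p => ∑ u, a u * p u = C) := by
          intro p hp
          rw [Finset.mem_filter]
          exact ⟨(Finset.mem_filter.mp (Finset.mem_filter.mp hp).1).1, heqn p hp⟩
        have hn1 : 1 ≤ n := le_trans one_le_two hn
        have hcount := count_hyperplane (C := C) B hn1 hane
        rw [← hbox] at hcount
        exact (Finset.card_le_card hsubset).trans hcount
    calc ∑ κ ∈ (Finset.univ : Finset (Equiv.Perm (Fin n) × (Fin n → Bool))),
          (T.filter (fun p => keyF p = κ)).card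
        ≤ (Finset.univ : Finset (Equiv.Perm (Fin n) × (Fin n → Bool))).card * B ^ (n - 1) := by
          have := Finset.sum_le_card_nsmul Finset.univ _ (B ^ (n - 1)) hbound
          simpa [smul_eq_mul] using this
      _ = Nat.factorial n * 2 ^ n * B ^ (n - 1) := by
          rw [Finset.card_univ, Fintype.card_prod, Fintype.card_perm, Fintype.card_fin]
          congr 2
          simp [Fintype.card_fun]
  rw [hcardeq, div_le_div_iff₀ (by positivity) hB0]
  have hcast : (T.card : ℝ) ≤ (Nat.factorial n : ℝ) * 2 ^ n * (B : ℝ) ^ (n - 1) := by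
    have := (Nat.cast_le (α := ℝ)).mpr hmain
    push_cast at this
    exact this
  calc (T.card : ℝ) * (B : ℝ)
      ≤ ((Nat.factorial n : ℝ) * 2 ^ n * (B : ℝ) ^ (n - 1)) * (B : ℝ) :=
        mul_le_mul_of_nonneg_right hcast hB0.le
    _ = 2 ^ n * (Nat.factorial n : ℝ) * (B : ℝ) ^ n := by
        rw [mul_assoc, ← pow_succ]
        have h1n : n - 1 + 1 = n := Nat.succ_pred_eq_of_pos (lt_of_lt_of_le zero_lt_two hn)
        rw [h1n]
        ring
end
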